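/- Let σ be a locally finite positive Borel measure on ℝ, I₀ a dyadic interval with σ(I₀) > 0, and f ∈ L²(σ) supported on I₀. Define the stopping collection ℱ ⊂ 𝒟 recursively: I₀ ∈ ℱ, and for each F ∈ ℱ, every maximal dyadic interval F' ⊊ F with 𝔼^σ_{F'}|f| > 4·𝔼^σ_F|f| belongs to ℱ. Then Σ_{F∈ℱ} (𝔼^σ_F|f|)² σ(F) ≤ C‖f‖²_{L²(σ)} for an absolute constant C. -/

import Mathlib

open MeasureTheory Set
open scoped ENNReal NNReal

noncomputable section

namespace TwoWeight

/-- Truncated Hilbert transform `H_{e,d}(f σ)(x) = ∫_{e<|x-y|<d} f(y)/(y-x) dσ(y)`. -/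
def Htr (σ : Measure ℝ) (f : ℝ → ℝ) (e d : ℝ) (x : ℝ) : ℝ :=
  ∫ y in {y : ℝ | e < |x - y| ∧ |x - y| < d}, f y / (y - x) ∂σ

/-- Poisson integral `P(μ, I)` for the interval `I = [a,b]`. -/
def Poisson (μ : Measure ℝ) (a b : ℝ) : ℝ≥0∞ :=
  ∫⁻ x, ENNReal.ofReal ((b - a) / ((b - a) ^ 2 + (Metric.infDist x (Icc a b)) ^ 2)) ∂μ

/-- The Poisson `A₂` condition with constant `A`, over all intervals. -/
def A2Cond (σ w : Measure ℝ) (A : ℝ) : Prop :=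
  ∀ a b : ℝ, a < b → Poisson σ a b * Poisson w a b ≤ ENNReal.ofReal A

/-- The two interval testing conditions with constant `T`, uniformly over truncations. -/
def Testing (σ w : Measure ℝ) (T : ℝ) : Prop :=
  ∀ a b : ℝ, a < b → ∀ e d : ℝ, 0 < e → e < d →
    (∫⁻ x in Icc a b, ENNReal.ofReal ((Htr σ ((Icc a b).indicator 1) e d x) ^ 2) ∂w
        ≤ ENNReal.ofReal (T ^ 2) * σ (Icc a b)) ∧
    (∫⁻ x in Icc a b, ENNReal.ofReal ((Htr w ((Icc a b).indicator 1) e d x) ^ 2) ∂σ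
        ≤ ENNReal.ofReal (T ^ 2) * w (Icc a b))

/-- A dyadic interval `[2^k n, 2^k(n+1))` of the standard dyadic grid. -/
structure DI where
  k : ℤ
  n : ℤ

namespace DI
/-- left endpoint -/
def left (I : DI) : ℝ := (2 : ℝ) ^ I.k * (I.n : ℝ)
/-- right endpoint -/
def right (I : DI) : ℝ := (2 : ℝ) ^ I.k * ((I.n : ℝ) + 1)
/-- the underlying set -/
def set (I : DI) : Set ℝ := Ico I.left I.right
/-- length -/
def len (I : DI) : ℝ := (2 : ℝ) ^ I.k
/-- left child -/
def lc (I : DI) : DI := ⟨I.k - 1, 2 * I.n⟩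
/-- right child -/
def rc (I : DI) : DI := ⟨I.k - 1, 2 * I.n + 1⟩
end DI

/-- `J ⋐ I` : `J ⊆ I` and `2^r |J| ≤ |I|`. -/
def csub (r : ℕ) (J I : DI) : Prop := J.set ⊆ I.set ∧ (2 : ℝ) ^ r * J.len ≤ I.len

/-- Distance of a subinterval `K ⊆ J` to the boundary of `J`. -/
def bdist (K J : DI) : ℝ := min (K.left - J.left) (J.right - K.right)

/-- Goodness of a dyadic interval, with parameters `r`, `eps`. -/
def Good (r : ℕ) (eps : ℝ) (I : DI) : Prop :=
  ∀ J : DI, I.set ⊆ J.set → (2 : ℝ) ^ ((r : ℤ) - 1) * I.len ≤ J.len →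
    I.len ^ eps * J.len ^ (1 - eps) ≤ bdist I.lc J ∧
    I.len ^ eps * J.len ^ (1 - eps) ≤ bdist I.rc J

/-- `σ`-average `𝔼^σ_I f` of `f` over `I`. -/
def avg (σ : Measure ℝ) (I : DI) (f : ℝ → ℝ) : ℝ :=
  (σ I.set).toReal⁻¹ * ∫ x in I.set, f x ∂σ

/-- Martingale difference `Δ^σ_I f`. -/
def mdiff (σ : Measure ℝ) (I : DI) (f : ℝ → ℝ) : ℝ → ℝ := fun x =>
  (I.lc.set.indicator (fun _ => avg σ I.lc f) x + I.rc.set.indicator (fun _ => avg σ I.rc f) x)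
    - I.set.indicator (fun _ => avg σ I f) x

/-- `L²(w)`-normalized Haar function `h^w_J`. -/
def haar (w : Measure ℝ) (J : DI) : ℝ → ℝ := fun x =>
  J.lc.set.indicator (fun _ =>
      Real.sqrt ((w J.rc.set).toReal / ((w J.lc.set).toReal * (w J.set).toReal))) x
    - J.rc.set.indicator (fun _ =>
      Real.sqrt ((w J.lc.set).toReal / ((w J.rc.set).toReal * (w J.set).toReal))) x

/-- `⟨x, h^w_J⟩_{L²(w)}`. -/
def haarX (w : Measure ℝ) (J : DI) : ℝ := ∫ x, x * haar w J x ∂w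

/-- Energy `E(w,J)²`. -/
def energySq (w : Measure ℝ) (J : DI) : ℝ :=
  (w J.set).toReal⁻¹ * ∫ x in J.set, ((x - avg w J id) / J.len) ^ 2 ∂w

/-- Poisson integral, as a real number, of a measure relative to a dyadic interval. -/
def PoissonR (μ : Measure ℝ) (I : DI) : ℝ := (Poisson μ I.left I.right).toReal

/-- The energy stopping inequality `P(σ1_{I₀},I)² E(w,I)² w(I) > 10 C₀ 𝓗² σ(I)`. -/
def EnergyBad (σ w : Measure ℝ) (C₀ H : ℝ) (I₀ I : DI) : Prop :=
  10 * C₀ * H ^ 2 * (σ I.set).toReal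
    < (PoissonR (σ.restrict I₀.set) I) ^ 2 * energySq w I * (w I.set).toReal

/-- `ℱ_energy(I₀)` : maximal dyadic intervals `I ⊊ I₀` satisfying `EnergyBad`. -/
def FEnergy (σ w : Measure ℝ) (C₀ H : ℝ) (I₀ : DI) : Set DI :=
  {I | I.set ⊂ I₀.set ∧ EnergyBad σ w C₀ H I₀ I ∧
    ∀ I' : DI, I'.set ⊂ I₀.set → EnergyBad σ w C₀ H I₀ I' → I.set ⊆ I'.set → I' = I}

/-- The child of `I` containing `J` (for `J` contained in a child of `I`). -/
def cc (I J : DI) : DI :=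
  @ite _ (J.set ⊆ I.lc.set) (Classical.propDecidable _) I.lc I.rc

/-- `𝔼^σ_J Δ^σ_I f` for `J ⋐ I` : the constant value of `Δ^σ_I f` on the child of `I`
containing `J`. -/
def coef (σ : Measure ℝ) (f : ℝ → ℝ) (I J : DI) : ℝ := avg σ (cc I J) f - avg σ I f

/-- `𝒬₂` : the second coordinates of a collection of pairs. -/
def coll2 (Q : Set (DI × DI)) : Set DI := {J | ∃ p ∈ Q, p.2 = J}

/-- `𝒬̃₁` : the intervals `(Q₁)_{Q₂}` of a collection of pairs. -/
def tcoll1 (Q : Set (DI × DI)) : Set DI := {K | ∃ p ∈ Q, cc p.1 p.2 = K}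

/-- Admissible collection of pairs relative to `I₀`. -/
def Admissible (σ w : Measure ℝ) (C₀ H : ℝ) (r : ℕ) (eps : ℝ) (I₀ : DI)
    (Q : Set (DI × DI)) : Prop :=
  (∀ p ∈ Q, csub r p.2 p.1 ∧ p.1.set ⊆ I₀.set ∧ Good r eps p.1) ∧
  (∀ p ∈ Q, ∀ p' ∈ Q, p'.2 = p.2 → ∀ I : DI, p'.1.set ⊆ I.set → I.set ⊆ p.1.set →
      Good r eps I → (I, p.2) ∈ Q) ∧
  (∀ p ∈ Q, ∀ F ∈ FEnergy σ w C₀ H I₀, ¬ (cc p.1 p.2).set ⊆ F.set ∧ ¬ p.2.set ⊆ F.set)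

/-- `Σ_{J ∈ 𝒬₂, J ⊆ K} ⟨x, h^w_J⟩²`. -/
def haarSum (w : Measure ℝ) (Q : Set (DI × DI)) (K : DI) : ℝ :=
  ∑' J : {J : DI // J ∈ coll2 Q ∧ J.set ⊆ K.set}, (haarX w J.1) ^ 2

/-- `size(𝒬) ≤ τ`. -/
def SizeBound (σ w : Measure ℝ) (I₀ : DI) (Q : Set (DI × DI)) (τ : ℝ) : Prop :=
  ∀ K ∈ tcoll1 Q ∪ coll2 Q,
    (PoissonR (σ.restrict (I₀.set \ K.set)) K) ^ 2 * haarSum w Q K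
      ≤ τ ^ 2 * ((σ K.set).toReal * K.len ^ 2)

/-- The bilinear form `B_𝒬(f,g)` (with truncation parameters `e < d`). -/
def BQ (σ w : Measure ℝ) (I₀ : DI) (Q : Set (DI × DI)) (e d : ℝ) (f g : ℝ → ℝ) : ℝ :=
  ∑' p : Q, coef σ f p.1.1 p.1.2
    * ∫ x, Htr σ ((I₀.set \ (cc p.1.1 p.1.2).set).indicator 1) e d x * mdiff w p.1.2 g x ∂w

/-- The bilinear form `B^{above}(f,g)`. -/
def BAbove (σ w : Measure ℝ) (r : ℕ) (I₀ : DI) (e d : ℝ) (f g : ℝ → ℝ) : ℝ :=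
  ∑' p : {p : DI × DI // p.1.set ⊆ I₀.set ∧ csub r p.2 p.1},
    coef σ f p.1.1 p.1.2
      * ∫ x, Htr σ ((cc p.1.1 p.1.2).set.indicator 1) e d x * mdiff w p.1.2 g x ∂w

/-- The stopping form `B^{stop}_{I₀}(f,g)`. -/
def BStop (σ w : Measure ℝ) (r : ℕ) (I₀ : DI) (e d : ℝ) (f g : ℝ → ℝ) : ℝ :=
  ∑' p : {p : DI × DI // p.1.set ⊆ I₀.set ∧ csub r p.2 p.1},
    coef σ f p.1.1 p.1.2
      * ∫ x, Htr σ ((I₀.set \ (cc p.1.1 p.1.2).set).indicator 1) e d x * mdiff w p.1.2 g x ∂w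

/-- The form with argument `H_σ 1_{I₀}`. -/
def BTop (σ w : Measure ℝ) (r : ℕ) (I₀ : DI) (e d : ℝ) (f g : ℝ → ℝ) : ℝ :=
  ∑' p : {p : DI × DI // p.1.set ⊆ I₀.set ∧ csub r p.2 p.1},
    coef σ f p.1.1 p.1.2
      * ∫ x, Htr σ (I₀.set.indicator 1) e d x * mdiff w p.1.2 g x ∂w

/-- A maximal dyadic interval `F' ⊊ F` with `𝔼^σ_{F'}|f| > 4 𝔼^σ_F|f|`. -/
def StopChild (sg : Measure ℝ) (f : ℝ → ℝ) (F F' : DI) : Prop :=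
  F'.set ⊂ F.set ∧ 4 * avg sg F (fun x => |f x|) < avg sg F' (fun x => |f x|) ∧
  ∀ F'' : DI, F'.set ⊆ F''.set → F''.set ⊂ F.set →
    4 * avg sg F (fun x => |f x|) < avg sg F'' (fun x => |f x|) → F'' = F'

/-- The stopping collection `ℱ` generated from `I₀` by the stopping children rule. -/
def StopColl (sg : Measure ℝ) (f : ℝ → ℝ) (I₀ : DI) : Set DI :=
  {F | ∃ n : ℕ, ∃ c : ℕ → DI, c 0 = I₀ ∧ c n = F ∧
    ∀ i < n, StopChild sg f (c i) (c (i + 1))}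


section Aux

open DI in
theorem DI.two_zpow_pos (k : ℤ) : (0:ℝ) < 2 ^ k := zpow_pos two_pos k

theorem DI.left_lt_right (I : DI) : I.left < I.right := by
  have := DI.two_zpow_pos I.k
  unfold DI.left DI.right
  nlinarith

theorem DI.right_sub_left (I : DI) : I.right - I.left = 2 ^ I.k := by
  unfold DI.left DI.right; ring

theorem DI.set_nonempty (I : DI) : I.set.Nonempty := by
  rw [DI.set, Set.nonempty_Ico]; exact I.left_lt_right

theorem DI.measurableSet (I : DI) : MeasurableSet I.set := measurableSet_Ico

theorem DI.endpoints_of_subset {I J : DI} (h : I.set ⊆ J.set) :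
    J.left ≤ I.left ∧ I.right ≤ J.right := by
  rw [DI.set, DI.set, Set.Ico_subset_Ico_iff I.left_lt_right] at h
  exact h

theorem DI.k_le_of_subset {I J : DI} (h : I.set ⊆ J.set) : I.k ≤ J.k := by
  obtain ⟨h1, h2⟩ := DI.endpoints_of_subset h
  have hlen : (2:ℝ) ^ I.k ≤ 2 ^ J.k := by
    have e1 := I.right_sub_left
    have e2 := J.right_sub_left
    linarith
  exact_mod_cast (zpow_le_zpow_iff_right₀ (by norm_num : (1:ℝ) < 2)).mp hlen

theorem DI.set_eq_of_subset_of_k_eq {I J : DI} (h : I.set ⊆ J.set) (hk : I.k = J.k) :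
    I.set = J.set := by
  obtain ⟨h1, h2⟩ := DI.endpoints_of_subset h
  have e1 := I.right_sub_left
  have e2 := J.right_sub_left
  rw [hk] at e1
  have hl : I.left = J.left := by linarith
  have hr : I.right = J.right := by linarith
  rw [DI.set, DI.set, hl, hr]

theorem DI.eq_of_set_eq {I J : DI} (h : I.set = J.set) : I = J := by
  have hk : I.k = J.k :=
    le_antisymm (DI.k_le_of_subset h.le) (DI.k_le_of_subset h.ge)
  obtain ⟨h1, h2⟩ := DI.endpoints_of_subset h.le
  obtain ⟨h3, h4⟩ := DI.endpoints_of_subset h.ge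
  have hl : I.left = J.left := le_antisymm h3 h1
  have hn : I.n = J.n := by
    have h2k := DI.two_zpow_pos I.k
    rw [DI.left, DI.left, ← hk] at hl
    have : (I.n : ℝ) = (J.n : ℝ) := by
      exact mul_left_cancel₀ (ne_of_gt h2k) hl
    exact_mod_cast this
  cases I; cases J
  simp_all

theorem DI.k_lt_of_ssubset {I J : DI} (h : I.set ⊂ J.set) : I.k < J.k := by
  refine lt_of_le_of_ne (DI.k_le_of_subset h.subset) fun he => ?_
  exact h.ne (DI.set_eq_of_subset_of_k_eq h.subset he)

theorem DI.subset_of_mem_of_k_le {I J : DI} {x : ℝ} (hxI : x ∈ I.set) (hxJ : x ∈ J.set)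
    (hk : I.k ≤ J.k) : I.set ⊆ J.set := by
  set m : ℕ := (J.k - I.k).toNat with hm
  have hJk : J.k = I.k + (m : ℤ) := by omega
  have hpow : (2:ℝ) ^ J.k = 2 ^ I.k * ((2 ^ m : ℤ) : ℝ) := by
    rw [hJk, zpow_add₀ (by norm_num : (2:ℝ) ≠ 0)]
    norm_num
  have h2k := DI.two_zpow_pos I.k
  rw [DI.set, Set.mem_Ico] at hxI hxJ
  rw [DI.left, DI.right] at hxI hxJ
  rw [hpow] at hxJ
  -- key1 : J.left < I.right gives 2^m * J.n ≤ I.n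
  have key1 : (2:ℤ) ^ m * J.n ≤ I.n := by
    have h1 : 2 ^ I.k * (((2 ^ m : ℤ) : ℝ) * (J.n : ℝ)) < 2 ^ I.k * ((I.n : ℝ) + 1) := by
      calc 2 ^ I.k * (((2 ^ m : ℤ) : ℝ) * (J.n : ℝ)) = 2 ^ I.k * ((2 ^ m : ℤ) : ℝ) * (J.n : ℝ) := by
            ring
        _ ≤ x := hxJ.1
        _ < 2 ^ I.k * ((I.n : ℝ) + 1) := hxI.2
    have h2 : ((2 ^ m : ℤ) : ℝ) * (J.n : ℝ) < (I.n : ℝ) + 1 := by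
      exact lt_of_mul_lt_mul_left (by linarith [h1]) (le_of_lt h2k)
    have h3 : ((2 ^ m * J.n : ℤ) : ℝ) < ((I.n + 1 : ℤ) : ℝ) := by push_cast; push_cast at h2; linarith
    have := Int.cast_lt.mp h3
    omega
  -- key2 : I.left < J.right gives I.n + 1 ≤ 2^m * (J.n + 1)
  have key2 : I.n + 1 ≤ (2:ℤ) ^ m * (J.n + 1) := by
    have h1 : 2 ^ I.k * (I.n : ℝ) < 2 ^ I.k * (((2 ^ m : ℤ) : ℝ) * ((J.n : ℝ) + 1)) := by
      calc 2 ^ I.k * (I.n : ℝ) ≤ x := hxI.1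
        _ < 2 ^ I.k * ((2 ^ m : ℤ) : ℝ) * ((J.n : ℝ) + 1) := hxJ.2
        _ = 2 ^ I.k * (((2 ^ m : ℤ) : ℝ) * ((J.n : ℝ) + 1)) := by ring
    have h2 : (I.n : ℝ) < ((2 ^ m : ℤ) : ℝ) * ((J.n : ℝ) + 1) :=
      lt_of_mul_lt_mul_left h1 (le_of_lt h2k)
    have h3 : ((I.n : ℤ) : ℝ) < ((2 ^ m * (J.n + 1) : ℤ) : ℝ) := by push_cast; push_cast at h2; linarith
    have := Int.cast_lt.mp h3
    omega
  rw [DI.set, DI.set]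
  apply Set.Ico_subset_Ico
  · rw [DI.left, DI.left, hpow]
    calc 2 ^ I.k * ((2 ^ m : ℤ) : ℝ) * (J.n : ℝ) = 2 ^ I.k * (((2 ^ m * J.n : ℤ) : ℝ)) := by
          push_cast; ring
      _ ≤ 2 ^ I.k * (I.n : ℝ) := by
          apply mul_le_mul_of_nonneg_left _ (le_of_lt h2k)
          exact_mod_cast key1
  · rw [DI.right, DI.right, hpow]
    calc 2 ^ I.k * ((I.n : ℝ) + 1) = 2 ^ I.k * (((I.n + 1 : ℤ) : ℝ)) := by push_cast; ring
      _ ≤ 2 ^ I.k * (((2 ^ m * (J.n + 1) : ℤ) : ℝ)) := by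
          apply mul_le_mul_of_nonneg_left _ (le_of_lt h2k)
          exact_mod_cast key2
      _ = 2 ^ I.k * ((2 ^ m : ℤ) : ℝ) * ((J.n : ℝ) + 1) := by push_cast; ring

theorem DI.nested {I J : DI} (h : (I.set ∩ J.set).Nonempty) :
    I.set ⊆ J.set ∨ J.set ⊆ I.set := by
  obtain ⟨x, hxI, hxJ⟩ := h
  rcases le_total I.k J.k with hk | hk
  · exact Or.inl (DI.subset_of_mem_of_k_le hxI hxJ hk)
  · exact Or.inr (DI.subset_of_mem_of_k_le hxJ hxI hk)

end Aux


section Stop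

variable {sg : Measure ℝ} {f : ℝ → ℝ} {I₀ : DI}

theorem avg_abs_nonneg (σ : Measure ℝ) (I : DI) (g : ℝ → ℝ) :
    0 ≤ avg σ I (fun x => |g x|) := by
  unfold avg
  apply mul_nonneg (inv_nonneg.mpr ENNReal.toReal_nonneg)
  exact integral_nonneg fun x => abs_nonneg _

theorem I0_mem_stopColl : I₀ ∈ StopColl sg f I₀ :=
  ⟨0, fun _ => I₀, rfl, rfl, fun i hi => absurd hi (Nat.not_lt_zero i)⟩

theorem StopColl.subset_I0 {F : DI} (hF : F ∈ StopColl sg f I₀) : F.set ⊆ I₀.set := by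
  obtain ⟨n, c, h0, hn, hs⟩ := hF
  have key : ∀ i, i ≤ n → (c i).set ⊆ I₀.set := by
    intro i
    induction i with
    | zero => intro _; rw [h0]
    | succ k ih =>
        intro hk
        exact ((hs k (by omega)).1.subset).trans (ih (by omega))
  rw [← hn]
  exact key n le_rfl

theorem StopColl.exists_parent {F : DI} (hF : F ∈ StopColl sg f I₀)
    (hne : F.set ≠ I₀.set) :
    ∃ P ∈ StopColl sg f I₀, StopChild sg f P F := by
  obtain ⟨n, c, h0, hn, hs⟩ := hF
  cases n with
  | zero => exact absurd (by rw [← hn, h0]) hne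
  | succ m =>
      exact ⟨c m, ⟨m, c, h0, rfl, fun i hi => hs i (by omega)⟩, hn ▸ hs m (by omega)⟩

theorem no_between : ∀ n : ℕ, ∀ P : DI, P ∈ StopColl sg f I₀ → (I₀.k - P.k).toNat ≤ n →
    ∀ m : ℕ, ∀ F : DI, F ∈ StopColl sg f I₀ → (P.k - F.k).toNat ≤ m →
    ∀ F' : DI, StopChild sg f P F' → F'.set ⊂ F.set → F.set ⊂ P.set → False := by
  intro n
  induction n using Nat.strong_induction_on with
  | _ n IHn =>
  intro P hP hPn m
  induction m using Nat.strong_induction_on with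
  | _ m IHm =>
  intro F hF hFm F' hPF' hF'F hFP
  have hFI : F.set ≠ I₀.set := (hFP.trans_subset (StopColl.subset_I0 hP)).ne
  obtain ⟨Q, hQ, hQF⟩ := StopColl.exists_parent hF hFI
  obtain ⟨x, hx⟩ := F.set_nonempty
  have hnest := DI.nested (I := Q) (J := P)
    ⟨x, hQF.1.subset hx, hFP.subset hx⟩
  by_cases hQP : Q.set = P.set
  · -- Q = P : contradiction with maximality of F'
    have hQP' : Q = P := DI.eq_of_set_eq hQP
    subst hQP'
    have hFeq : F = F' := hPF'.2.2 F hF'F.subset hFP hQF.2.1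
    exact hF'F.ne (by rw [hFeq])
  rcases hnest with hc | hc
  · -- Q ⊊ P : inner recursion with middle Q
    have hQss : Q.set ⊂ P.set := ssubset_of_subset_of_ne hc hQP
    have hkQ : Q.k < P.k := DI.k_lt_of_ssubset hQss
    have hkF : F.k < Q.k := DI.k_lt_of_ssubset hQF.1
    exact IHm (P.k - Q.k).toNat (by omega) Q hQ le_rfl F' hPF' (hF'F.trans hQF.1) hQss
  · -- P ⊊ Q : outer recursion with top Q
    have hPQ : P.set ⊂ Q.set := ssubset_of_subset_of_ne hc (fun h => hQP h.symm)
    have hkPQ : P.k < Q.k := DI.k_lt_of_ssubset hPQ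
    have hkQI : Q.k ≤ I₀.k := DI.k_le_of_subset (StopColl.subset_I0 hQ)
    exact IHn (I₀.k - Q.k).toNat (by omega) Q hQ le_rfl (Q.k - P.k).toNat P hP le_rfl
      F hQF hFP hPQ

theorem ancestor_chain {P F F' : DI} (hP : P ∈ StopColl sg f I₀) (hF : F ∈ StopColl sg f I₀)
    (hPF' : StopChild sg f P F') (h1 : F'.set ⊂ F.set) : P.set ⊆ F.set := by
  obtain ⟨x, hx⟩ := F'.set_nonempty
  rcases DI.nested (I := F) (J := P) ⟨x, h1.subset hx, hPF'.1.subset hx⟩ with hc | hc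
  · by_cases he : F.set = P.set
    · exact he.ge
    · exact absurd (no_between (I₀.k - P.k).toNat P hP le_rfl (P.k - F.k).toNat F hF le_rfl
        F' hPF' h1 (ssubset_of_subset_of_ne hc he)) not_false
  · exact hc

open scoped Classical in
theorem sum_ancestors : ∀ N : ℕ, ∀ F' : DI, F' ∈ StopColl sg f I₀ →
    (I₀.k - F'.k).toNat ≤ N →
    ∀ s : Finset DI, (∀ F ∈ s, F ∈ StopColl sg f I₀) →
    (∑ F ∈ s.filter (fun F => F'.set ⊆ F.set), avg sg F (fun x => |f x|))
      ≤ (4 / 3) * avg sg F' (fun x => |f x|) := by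
  intro N
  induction N using Nat.strong_induction_on with
  | _ N IH =>
  intro F' hF' hN s hs
  by_cases hI : F'.set = I₀.set
  · have hsub : s.filter (fun F => F'.set ⊆ F.set) ⊆ {F'} := by
      intro F hFmem
      rw [Finset.mem_filter] at hFmem
      have hFsub : F.set ⊆ I₀.set := StopColl.subset_I0 (hs F hFmem.1)
      have : F.set = F'.set := by
        apply Set.Subset.antisymm (by rw [hI]; exact hFsub) hFmem.2
      simp [DI.eq_of_set_eq this]
    calc (∑ F ∈ s.filter (fun F => F'.set ⊆ F.set), avg sg F (fun x => |f x|))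
        ≤ ∑ F ∈ ({F'} : Finset DI), avg sg F (fun x => |f x|) := by
          apply Finset.sum_le_sum_of_subset_of_nonneg hsub
          intro F _ _; exact avg_abs_nonneg sg F f
      _ = avg sg F' (fun x => |f x|) := Finset.sum_singleton _ _
      _ ≤ (4 / 3) * avg sg F' (fun x => |f x|) := by
          have := avg_abs_nonneg sg F' f; linarith
  · obtain ⟨P, hP, hPch⟩ := StopColl.exists_parent hF' hI
    have key : s.filter (fun F => F'.set ⊆ F.set)
        ⊆ insert F' (s.filter (fun F => P.set ⊆ F.set)) := by
      intro F hFm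
      rw [Finset.mem_filter] at hFm
      rw [Finset.mem_insert, Finset.mem_filter]
      by_cases he : F'.set = F.set
      · exact Or.inl (DI.eq_of_set_eq he).symm
      · exact Or.inr ⟨hFm.1, ancestor_chain hP (hs F hFm.1) hPch
          (ssubset_of_subset_of_ne hFm.2 he)⟩
    have hP4 : avg sg P (fun x => |f x|) ≤ avg sg F' (fun x => |f x|) / 4 := by
      have := hPch.2.1; linarith
    have hk1 : F'.k < P.k := DI.k_lt_of_ssubset hPch.1
    have hk2 : P.k ≤ I₀.k := DI.k_le_of_subset (StopColl.subset_I0 hP)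
    have hnm : F' ∉ s.filter (fun F => P.set ⊆ F.set) := by
      rw [Finset.mem_filter]
      rintro ⟨-, hPsub⟩
      exact hPch.1.not_subset hPsub
    have IH' := IH (I₀.k - P.k).toNat (by omega) P hP le_rfl s hs
    calc (∑ F ∈ s.filter (fun F => F'.set ⊆ F.set), avg sg F (fun x => |f x|))
        ≤ ∑ F ∈ insert F' (s.filter (fun F => P.set ⊆ F.set)), avg sg F (fun x => |f x|) := by
          apply Finset.sum_le_sum_of_subset_of_nonneg key
          intro F _ _; exact avg_abs_nonneg sg F f
      _ = avg sg F' (fun x => |f x|)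
            + ∑ F ∈ s.filter (fun F => P.set ⊆ F.set), avg sg F (fun x => |f x|) :=
          Finset.sum_insert hnm
      _ ≤ avg sg F' (fun x => |f x|) + (4 / 3) * avg sg P (fun x => |f x|) := by linarith
      _ ≤ (4 / 3) * avg sg F' (fun x => |f x|) := by linarith

end Stop


section Analytic

theorem DI.measure_ne_top (sg : Measure ℝ) [IsLocallyFiniteMeasure sg] (I : DI) :
    sg I.set ≠ ⊤ := by
  have h : sg I.set ≤ sg (Set.Icc I.left I.right) :=
    measure_mono (by rw [DI.set]; exact Set.Ico_subset_Icc_self)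
  exact (lt_of_le_of_lt h isCompact_Icc.measure_lt_top).ne

theorem termA {sg : Measure ℝ} [IsLocallyFiniteMeasure sg] {f : ℝ → ℝ}
    (hf : MemLp f 2 sg) (F : DI) :
    ENNReal.ofReal ((avg sg F (fun x => |f x|)) ^ 2) * sg F.set
      = ENNReal.ofReal (avg sg F (fun x => |f x|)) * ∫⁻ x in F.set, ENNReal.ofReal |f x| ∂sg := by
  by_cases h0 : sg F.set = 0
  · rw [h0, mul_zero, Measure.restrict_eq_zero.mpr h0, lintegral_zero_measure, mul_zero]
  · have hfin : sg F.set ≠ ⊤ := DI.measure_ne_top sg F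
    have hm : MemLp f 2 (sg.restrict F.set) := hf.restrict _
    haveI : IsFiniteMeasure (sg.restrict F.set) :=
      ⟨by rwa [Measure.restrict_apply_univ, lt_top_iff_ne_top]⟩
    have hint : Integrable (fun x => |f x|) (sg.restrict F.set) := (hm.integrable one_le_two).abs
    have hlint : (∫⁻ x in F.set, ENNReal.ofReal |f x| ∂sg)
        = ENNReal.ofReal (∫ x in F.set, |f x| ∂sg) :=
      (MeasureTheory.ofReal_integral_eq_lintegral_ofReal hint
        (Filter.Eventually.of_forall fun x => abs_nonneg _)).symm
    have ht : (sg F.set).toReal ≠ 0 := ENNReal.toReal_ne_zero.mpr ⟨h0, hfin⟩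
    have ha : 0 ≤ avg sg F (fun x => |f x|) := avg_abs_nonneg sg F f
    have hInt : (∫ x in F.set, |f x| ∂sg)
        = (sg F.set).toReal * avg sg F (fun x => |f x|) := by
      rw [avg]; field_simp
    rw [hlint, hInt, ENNReal.ofReal_mul ENNReal.toReal_nonneg,
      ENNReal.ofReal_toReal hfin, sq, ENNReal.ofReal_mul ha]
    ring

end Analytic

/-- quasi-orthogonality: `Σ_{F ∈ ℱ} (𝔼^σ_F |f|)² σ(F) ≤ C ‖f‖²_{L²(σ)}`. -/
theorem statement15 :
    ∃ C : ℝ, 0 < C ∧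
    ∀ (sg : Measure ℝ), IsLocallyFiniteMeasure sg →
    ∀ I₀ : DI, 0 < sg I₀.set →
    ∀ f : ℝ → ℝ, MemLp f 2 sg → Function.support f ⊆ I₀.set →
      ∑' F : StopColl sg f I₀,
          ENNReal.ofReal ((avg sg F.1 (fun x => |f x|)) ^ 2) * sg F.1.set
        ≤ ENNReal.ofReal C * ∫⁻ x, ENNReal.ofReal ((f x) ^ 2) ∂sg := by
  classical
  refine ⟨3, by norm_num, ?_⟩
  intro sg hloc I₀ _hI0 f hf _hsupp
  haveI := hloc
  set av : DI → ℝ := fun F => avg sg F (fun x => |f x|) with hav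
  set g : ℝ → ℝ≥0∞ := fun x => ENNReal.ofReal |f x| with hgdef
  have hgm : AEMeasurable g sg :=
    (ENNReal.measurable_ofReal.comp continuous_abs.measurable).comp_aemeasurable
      hf.aestronglyMeasurable.aemeasurable
  set L2 : ℝ≥0∞ := ∫⁻ x, ENNReal.ofReal ((f x) ^ 2) ∂sg with hL2
  rw [ENNReal.tsum_eq_iSup_sum]
  refine iSup_le fun s => ?_
  set t : Finset DI := s.image Subtype.val with ht
  have hts : ∀ F ∈ t, F ∈ StopColl sg f I₀ := by
    intro F hF
    rw [ht, Finset.mem_image] at hF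
    obtain ⟨b, _, rfl⟩ := hF
    exact b.2
  have hsum : (∑ F ∈ t, ENNReal.ofReal ((av F) ^ 2) * sg F.set)
      = ∑ b ∈ s, ENNReal.ofReal ((av b.1) ^ 2) * sg b.1.set :=
    Finset.sum_image (fun x _ y _ h => Subtype.ext h)
  rw [← hsum]
  set T := ∑ F ∈ t, ENNReal.ofReal ((av F) ^ 2) * sg F.set with hT
  set c : DI → ℝ≥0∞ := fun F => ENNReal.ofReal (av F) with hc
  set H : ℝ → ℝ≥0∞ := fun x => ∑ F ∈ t, c F * F.set.indicator (fun _ => (1 : ℝ≥0∞)) x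
    with hH
  have hHm : Measurable H :=
    Finset.measurable_sum t fun F _ => (measurable_const.indicator F.measurableSet).const_mul _
  -- Step B : T = ∫ H g
  have stepB : T = ∫⁻ x, H x * g x ∂sg := by
    calc T = ∑ F ∈ t, c F * ∫⁻ x in F.set, g x ∂sg :=
          Finset.sum_congr rfl fun F _ => termA hf F
      _ = ∑ F ∈ t, ∫⁻ x, c F * F.set.indicator g x ∂sg := by
          refine Finset.sum_congr rfl fun F _ => ?_
          rw [lintegral_const_mul' _ _ ENNReal.ofReal_ne_top,
            lintegral_indicator F.measurableSet]
      _ = ∫⁻ x, ∑ F ∈ t, c F * F.set.indicator g x ∂sg :=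
          (lintegral_finset_sum' t fun F _ =>
            ((hgm.indicator F.measurableSet).const_mul _)).symm
      _ = ∫⁻ x, H x * g x ∂sg := by
          refine lintegral_congr fun x => ?_
          rw [hH]
          rw [Finset.sum_mul]
          refine Finset.sum_congr rfl fun F _ => ?_
          by_cases hx : x ∈ F.set
          · simp [Set.indicator_of_mem hx, mul_assoc]
          · simp [Set.indicator_of_notMem hx]
  -- Step C preliminaries
  have hKsum : (∫⁻ x, H x * H x ∂sg)
      = ∑ F ∈ t, ∑ F' ∈ t, (c F * c F') * sg (F.set ∩ F'.set) := by
    have hpt : ∀ x, H x * H x = ∑ F ∈ t, ∑ F' ∈ t,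
        (c F * c F') * (F.set ∩ F'.set).indicator (fun _ => (1 : ℝ≥0∞)) x := by
      intro x
      rw [hH, Finset.sum_mul_sum]
      refine Finset.sum_congr rfl fun F _ => Finset.sum_congr rfl fun F' _ => ?_
      by_cases h1 : x ∈ F.set <;> by_cases h2 : x ∈ F'.set <;>
        simp [Set.indicator, h1, h2]
    calc (∫⁻ x, H x * H x ∂sg)
        = ∫⁻ x, ∑ F ∈ t, ∑ F' ∈ t,
            (c F * c F') * (F.set ∩ F'.set).indicator (fun _ => (1 : ℝ≥0∞)) x ∂sg :=
          lintegral_congr fun x => hpt x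
      _ = ∑ F ∈ t, ∑ F' ∈ t, (c F * c F') * sg (F.set ∩ F'.set) := by
          rw [lintegral_finset_sum' t fun F _ => (Finset.measurable_sum t fun F' _ =>
            (measurable_const.indicator (F.measurableSet.inter F'.measurableSet)).const_mul _).aemeasurable]
          refine Finset.sum_congr rfl fun F _ => ?_
          rw [lintegral_finset_sum' t fun F' _ =>
            ((measurable_const.indicator (F.measurableSet.inter F'.measurableSet)).const_mul _).aemeasurable]
          refine Finset.sum_congr rfl fun F' _ => ?_
          rw [lintegral_const_mul' _ _ (ENNReal.mul_ne_top ENNReal.ofReal_ne_top ENNReal.ofReal_ne_top),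
            lintegral_indicator (F.measurableSet.inter F'.measurableSet), setLIntegral_one]
  have hpair : ∀ F ∈ t, ∀ F' ∈ t, (c F * c F') * sg (F.set ∩ F'.set)
      ≤ (if F'.set ⊆ F.set then (c F' * sg F'.set) * c F else 0)
        + (if F.set ⊆ F'.set then (c F * sg F.set) * c F' else 0) := by
    intro F _ F' _
    by_cases h1 : F'.set ⊆ F.set
    · rw [if_pos h1]
      refine le_trans ?_ le_self_add
      calc (c F * c F') * sg (F.set ∩ F'.set) ≤ (c F * c F') * sg F'.set :=
            mul_le_mul_right (measure_mono Set.inter_subset_right) _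
        _ = (c F' * sg F'.set) * c F := by ring
    · rw [if_neg h1]
      by_cases h2 : F.set ⊆ F'.set
      · rw [if_pos h2]
        refine le_trans ?_ le_add_self
        calc (c F * c F') * sg (F.set ∩ F'.set) ≤ (c F * c F') * sg F.set :=
            mul_le_mul_right (measure_mono Set.inter_subset_left) _
          _ = (c F * sg F.set) * c F' := by ring
      · have hdisj : F.set ∩ F'.set = ∅ := by
          by_contra hne
          rcases DI.nested (Set.nonempty_iff_ne_empty.mpr hne) with h | h
          · exact h2 h
          · exact h1 h
        simp [hdisj]
  have hrow : ∀ F' ∈ t, (∑ F ∈ t, if F'.set ⊆ F.set then (c F' * sg F'.set) * c F else 0)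
      ≤ ENNReal.ofReal (4 / 3) * (ENNReal.ofReal ((av F') ^ 2) * sg F'.set) := by
    intro F' hF'
    rw [← Finset.sum_filter, ← Finset.mul_sum]
    have h1 : (∑ F ∈ t.filter (fun F => F'.set ⊆ F.set), c F)
        ≤ ENNReal.ofReal ((4 / 3) * av F') := by
      rw [hc]
      rw [← ENNReal.ofReal_sum_of_nonneg (fun F _ => avg_abs_nonneg sg F f)]
      exact ENNReal.ofReal_le_ofReal
        (sum_ancestors (I₀.k - F'.k).toNat F' (hts F' hF') le_rfl t hts)
    calc (c F' * sg F'.set) * ∑ F ∈ t.filter (fun F => F'.set ⊆ F.set), c F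
        ≤ (c F' * sg F'.set) * ENNReal.ofReal ((4 / 3) * av F') := mul_le_mul_right h1 _
      _ = ENNReal.ofReal (4 / 3) * (ENNReal.ofReal ((av F') ^ 2) * sg F'.set) := by
          rw [ENNReal.ofReal_mul (by norm_num : (0:ℝ) ≤ 4 / 3), hc, sq,
            ENNReal.ofReal_mul (avg_abs_nonneg sg F' f)]
          ring
  have stepC : (∫⁻ x, H x * H x ∂sg) ≤ ENNReal.ofReal (8 / 3) * T := by
    rw [hKsum]
    calc (∑ F ∈ t, ∑ F' ∈ t, (c F * c F') * sg (F.set ∩ F'.set))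
        ≤ ∑ F ∈ t, ∑ F' ∈ t,
            ((if F'.set ⊆ F.set then (c F' * sg F'.set) * c F else 0)
              + (if F.set ⊆ F'.set then (c F * sg F.set) * c F' else 0)) :=
          Finset.sum_le_sum fun F hF => Finset.sum_le_sum fun F' hF' => hpair F hF F' hF'
      _ = (∑ F ∈ t, ∑ F' ∈ t, if F'.set ⊆ F.set then (c F' * sg F'.set) * c F else 0)
          + ∑ F ∈ t, ∑ F' ∈ t, if F.set ⊆ F'.set then (c F * sg F.set) * c F' else 0 := by
          rw [← Finset.sum_add_distrib]
          exact Finset.sum_congr rfl fun F _ => Finset.sum_add_distrib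
      _ ≤ ENNReal.ofReal (4 / 3) * T + ENNReal.ofReal (4 / 3) * T := by
          refine add_le_add ?_ ?_
          · rw [Finset.sum_comm, hT, Finset.mul_sum]
            exact Finset.sum_le_sum fun F' hF' => hrow F' hF'
          · rw [hT, Finset.mul_sum]
            exact Finset.sum_le_sum fun F hF => hrow F hF
      _ = ENNReal.ofReal (8 / 3) * T := by
          rw [← add_mul, ← ENNReal.ofReal_add (by norm_num) (by norm_num)]
          norm_num
  -- Hoelder
  have hHolder : T ≤ (∫⁻ x, H x * H x ∂sg) ^ ((1:ℝ) / 2) * L2 ^ ((1:ℝ) / 2) := by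
    rw [stepB]
    have hpq : Real.HolderConjugate 2 2 := Real.HolderConjugate.two_two
    have hHg := ENNReal.lintegral_mul_le_Lp_mul_Lq sg hpq hHm.aemeasurable hgm
    have e1 : (∫⁻ x, H x ^ (2:ℝ) ∂sg) = ∫⁻ x, H x * H x ∂sg := by
      refine lintegral_congr fun x => ?_
      rw [show (2:ℝ) = ((2:ℕ):ℝ) by norm_num, ENNReal.rpow_natCast, sq]
    have e2 : (∫⁻ x, g x ^ (2:ℝ) ∂sg) = L2 := by
      refine lintegral_congr fun x => ?_
      rw [show (2:ℝ) = ((2:ℕ):ℝ) by norm_num, ENNReal.rpow_natCast, hgdef]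
      rw [← ENNReal.ofReal_pow (abs_nonneg _), sq_abs]
    calc (∫⁻ x, H x * g x ∂sg) = ∫⁻ x, (H * g) x ∂sg := rfl
      _ ≤ (∫⁻ x, H x ^ (2:ℝ) ∂sg) ^ ((1:ℝ) / 2) * (∫⁻ x, g x ^ (2:ℝ) ∂sg) ^ ((1:ℝ) / 2) := by
          simpa using hHg
      _ = (∫⁻ x, H x * H x ∂sg) ^ ((1:ℝ) / 2) * L2 ^ ((1:ℝ) / 2) := by rw [e1, e2]
  -- Conclusion
  by_cases hL2top : L2 = ⊤
  · rw [hL2top, ENNReal.mul_top (by simp : ENNReal.ofReal 3 ≠ 0)]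
    exact le_top
  have hTtop : T ≠ ⊤ := by
    rw [hT]
    refine (ENNReal.sum_lt_top.mpr fun F _ => ?_).ne
    exact ENNReal.mul_lt_top ENNReal.ofReal_lt_top (DI.measure_ne_top sg F).lt_top
  by_cases hT0 : T = 0
  · rw [hT0]; exact zero_le
  have hsq : T * T ≤ (ENNReal.ofReal (8 / 3) * L2) * T := by
    have hAB : ((∫⁻ x, H x * H x ∂sg) ^ ((1:ℝ)/2) * L2 ^ ((1:ℝ)/2))
        * ((∫⁻ x, H x * H x ∂sg) ^ ((1:ℝ)/2) * L2 ^ ((1:ℝ)/2))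
        = (∫⁻ x, H x * H x ∂sg) * L2 := by
      rw [mul_mul_mul_comm, ← ENNReal.rpow_add_of_nonneg _ _ (by norm_num) (by norm_num),
        ← ENNReal.rpow_add_of_nonneg _ _ (by norm_num) (by norm_num)]
      norm_num
    calc T * T ≤ ((∫⁻ x, H x * H x ∂sg) ^ ((1:ℝ)/2) * L2 ^ ((1:ℝ)/2))
          * ((∫⁻ x, H x * H x ∂sg) ^ ((1:ℝ)/2) * L2 ^ ((1:ℝ)/2)) := mul_le_mul' hHolder hHolder
      _ = (∫⁻ x, H x * H x ∂sg) * L2 := hAB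
      _ ≤ (ENNReal.ofReal (8 / 3) * T) * L2 := mul_le_mul_left stepC _
      _ = (ENNReal.ofReal (8 / 3) * L2) * T := by ring
  have hcancel : T ≤ ENNReal.ofReal (8 / 3) * L2 :=
    (ENNReal.mul_le_mul_iff_left hT0 hTtop).mp hsq
  calc T ≤ ENNReal.ofReal (8 / 3) * L2 := hcancel
    _ ≤ ENNReal.ofReal 3 * L2 :=
        mul_le_mul_left (ENNReal.ofReal_le_ofReal (by norm_num)) _


end TwoWeight
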